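/- For each field k, each n ≥ 2, and all f, g ∈ SL_n(k), there exists a polynomial map ν: k → SL_n(k) (each matrix entry a polynomial in one variable over k) with ν(0) = f and ν(1) = g. -/

import Mathlib

open Matrix Polynomial

namespace ExistsPolyPathSL

variable {k : Type*} [Field k] {n : ℕ}

/-- `M` is reachable from `1` by a polynomial path in `SL_n`. -/
def Good (M : Matrix (Fin n) (Fin n) k) : Prop :=
  ∃ P : Matrix (Fin n) (Fin n) (Polynomial k),
    P.det = 1 ∧ P.map (eval 0) = 1 ∧ P.map (eval 1) = M

lemma map_eval_mul (A B : Matrix (Fin n) (Fin n) (Polynomial k)) (t : k) :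
    (A * B).map (eval t) = A.map (eval t) * B.map (eval t) := by
  ext r s
  simp [Matrix.map_apply, Matrix.mul_apply, Polynomial.eval_finset_sum]

lemma det_map_eval (A : Matrix (Fin n) (Fin n) (Polynomial k)) (t : k) :
    (A.map (eval t)).det = A.det.eval t := by
  have := RingHom.map_det (evalRingHom t) A
  simpa [RingHom.mapMatrix_apply, coe_evalRingHom] using this.symm

lemma map_eval_transvection (i j : Fin n) (p : Polynomial k) (t : k) :
    (Matrix.transvection i j p).map (eval t) = Matrix.transvection i j (p.eval t) := by
  ext r s
  simp [Matrix.transvection, Matrix.map_apply, Matrix.add_apply, Matrix.one_apply,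
    Matrix.single, Matrix.of_apply, apply_ite (eval t)]

lemma good_one : Good (1 : Matrix (Fin n) (Fin n) k) :=
  ⟨1, det_one, Matrix.map_one _ eval_zero eval_one, Matrix.map_one _ eval_zero eval_one⟩

lemma good_mul {A B : Matrix (Fin n) (Fin n) k} (hA : Good A) (hB : Good B) :
    Good (A * B) := by
  obtain ⟨P, hP, hP0, hP1⟩ := hA
  obtain ⟨Q, hQ, hQ0, hQ1⟩ := hB
  exact ⟨P * Q, by simp [det_mul, hP, hQ],
    by rw [map_eval_mul, hP0, hQ0, one_mul],
    by rw [map_eval_mul, hP1, hQ1]⟩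

lemma good_transvection {i j : Fin n} (hij : i ≠ j) (c : k) :
    Good (Matrix.transvection i j c) := by
  refine ⟨Matrix.transvection i j (C c * X), det_transvection_of_ne i j hij _, ?_, ?_⟩
  · rw [map_eval_transvection]; simp [transvection_zero]
  · rw [map_eval_transvection]; simp

/-- The two-index diagonal matrix `diag(…,a,…,a⁻¹,…)` is a product of six transvections. -/
lemma six_transvections {i j : Fin n} (hij : i ≠ j) {a : k} (ha : a ≠ 0) :
    transvection i j a * transvection j i (-a⁻¹) * transvection i j a *
      transvection i j (-1) * transvection j i 1 * transvection i j (-1) =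
    diagonal (fun m => if m = i then a else if m = j then a⁻¹ else 1) := by
  have h1 : ∀ c d : k, single i j c * single i j d = 0 :=
    fun c d => single_mul_single_of_ne c i j _ hij.symm d
  have h2 : ∀ c d : k, single j i c * single j i d = 0 :=
    fun c d => single_mul_single_of_ne c j i _ hij d
  have h3 : ∀ c d : k, single i i c * single j i d = 0 :=
    fun c d => single_mul_single_of_ne c i i _ hij d
  have h4 : ∀ c d : k, single j j c * single i j d = 0 :=
    fun c d => single_mul_single_of_ne c j j _ hij.symm d
  have h5 : ∀ c d : k, single i i c * single j j d = 0 :=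
    fun c d => single_mul_single_of_ne c i i _ hij d
  have h6 : ∀ c d : k, single j j c * single i i d = 0 :=
    fun c d => single_mul_single_of_ne c j j _ hij.symm d
  have h7 : ∀ c d : k, single i j c * single i i d = 0 :=
    fun c d => single_mul_single_of_ne c i j _ hij.symm d
  have h8 : ∀ c d : k, single j i c * single j j d = 0 :=
    fun c d => single_mul_single_of_ne c j i _ hij d
  simp only [transvection, mul_add, add_mul, mul_one, one_mul,
    single_mul_single_same, h1, h2, h3, h4, h5, h6, h7, h8,
    mul_zero, zero_mul, add_zero, zero_add, Matrix.mul_zero, Matrix.zero_mul]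
  clear h1 h2 h3 h4 h5 h6 h7 h8
  have hij' : j ≠ i := hij.symm
  ext r s
  by_cases hri : r = i <;> by_cases hrj : r = j <;> by_cases hsi : s = i <;> by_cases hsj : s = j <;>
    simp_all [Matrix.add_apply, Matrix.one_apply, Matrix.diagonal_apply, ne_comm,
      mul_inv_cancel₀ ha, inv_mul_cancel₀ ha] <;>
    (try (split_ifs <;> simp_all))

lemma good_diag_two {i j : Fin n} (hij : i ≠ j) {a : k} (ha : a ≠ 0) :
    Good (diagonal (fun m => if m = i then a else if m = j then a⁻¹ else 1)) := by
  rw [← six_transvections hij ha]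
  exact good_mul (good_mul (good_mul (good_mul (good_mul
    (good_transvection hij a) (good_transvection hij.symm (-a⁻¹)))
    (good_transvection hij a)) (good_transvection hij (-1)))
    (good_transvection hij.symm 1)) (good_transvection hij (-1))

lemma prod_two_point {i j : Fin n} (hij : i ≠ j) (a b : k) :
    (∏ x, (if x = i then a else if x = j then b else 1)) = a * b := by
  have : (fun x : Fin n => if x = i then a else if x = j then b else 1) =
      Function.update (Function.update (fun _ : Fin n => (1 : k)) j b) i a := by
    funext x
    rcases eq_or_ne x i with rfl | hxi
    · rw [if_pos rfl, Function.update_self]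
    · rcases eq_or_ne x j with rfl | hxj
      · rw [if_neg hxi, if_pos rfl, Function.update_of_ne hxi, Function.update_self]
      · rw [if_neg hxi, if_neg hxj, Function.update_of_ne hxi, Function.update_of_ne hxj]
  rw [this, Finset.prod_update_of_mem (Finset.mem_univ i),
    Finset.prod_update_of_mem (by simp [hij.symm] : j ∈ Finset.univ \ {i})]
  simp [mul_assoc]

lemma good_diagonal_aux (m : ℕ) : ∀ (j : ℕ), n ≤ j + m → ∀ d : Fin n → k,
    (∏ x, d x) = 1 → (∀ x : Fin n, (x : ℕ) < j → d x = 1) → Good (diagonal d) := by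
  induction m with
  | zero =>
    intro j hj d _ hd
    have : d = fun _ => 1 := funext fun x => hd x (lt_of_lt_of_le x.isLt (by omega))
    rw [this]
    have h1 : Matrix.diagonal (fun _ : Fin n => (1 : k)) = 1 := by
      rw [show (fun _ : Fin n => (1 : k)) = (1 : Fin n → k) from rfl]
      exact Matrix.diagonal_one
    rw [h1]; exact good_one
  | succ m IH =>
    intro j hj d hprod hd
    by_cases hjm : n ≤ j + m
    · exact IH j hjm d hprod hd
    have hne : ∀ x : Fin n, d x ≠ 0 := by
      intro x hx
      rw [Finset.prod_eq_zero (Finset.mem_univ x) hx] at hprod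
      exact zero_ne_one hprod
    have hjn : j < n := by omega
    set i : Fin n := ⟨j, hjn⟩ with hi
    by_cases hj1 : j + 1 < n
    · set i' : Fin n := ⟨j + 1, hj1⟩ with hi'
      have hii' : i ≠ i' := by simp [hi, hi', Fin.ext_iff]
      set d' : Fin n → k := Function.update (Function.update d i 1) i' (d i * d i') with hd'def
      have hd'i : d' i = 1 := by
        rw [hd'def, Function.update_of_ne hii', Function.update_self]
      have hd'i' : d' i' = d i * d i' := by rw [hd'def, Function.update_self]
      have hd'other : ∀ x, x ≠ i → x ≠ i' → d' x = d x := by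
        intro x hx hx'
        rw [hd'def, Function.update_of_ne hx', Function.update_of_ne hx]
      have hprodd' : (∏ x, d' x) = 1 := by
        rw [hd'def, Finset.prod_update_of_mem (Finset.mem_univ i'),
          Finset.prod_update_of_mem (by simp [hii'] : i ∈ Finset.univ \ {i'})]
        have := Finset.prod_eq_prod_diff_singleton_mul (Finset.mem_univ i') d
        rw [Finset.prod_eq_prod_diff_singleton_mul
          (by simp [hii'] : i ∈ Finset.univ \ {i'}) d] at this
        rw [hprod] at this
        linear_combination -this
      have hd'small : ∀ x : Fin n, (x : ℕ) < j + 1 → d' x = 1 := by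
        intro x hx
        rcases eq_or_ne x i with rfl | hxi
        · exact hd'i
        · have hxj : (x : ℕ) < j := by
            rcases Nat.lt_succ_iff_lt_or_eq.1 hx with h | h
            · exact h
            · exact absurd (Fin.ext h) hxi
          have hxi' : x ≠ i' := by
            intro h
            rw [h] at hxj
            have : (i' : ℕ) = j + 1 := rfl
            omega
          rw [hd'other x hxi hxi']
          exact hd x hxj
      have key : diagonal d =
          diagonal (fun m => if m = i then d i else if m = i' then (d i)⁻¹ else 1) *
            diagonal d' := by
        rw [diagonal_mul_diagonal]
        apply congrArg Matrix.diagonal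
        funext x
        rcases eq_or_ne x i with rfl | hxi
        · simp [hii', hd'i]
        · rcases eq_or_ne x i' with rfl | hxi'
          · simp [Pi.mul_apply, hxi, hd'i', inv_mul_cancel_left₀ (hne i)]
          · simp [Pi.mul_apply, hxi, hxi', hd'other x hxi hxi']
      rw [key]
      exact good_mul (good_diag_two hii' (hne i))
        (IH (j + 1) (by omega) d' hprodd' hd'small)
    · -- j + 1 = n : the only possibly nontrivial entry is the last one, and it is 1
      have hdi : d i = 1 := by
        have : (∏ x, d x) = d i := by
          apply Finset.prod_eq_single
          · intro x _ hx
            apply hd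
            have : (x : ℕ) < n := x.isLt
            have hxj : (x : ℕ) ≠ j := fun h => hx (Fin.ext h)
            omega
          · simp
        rw [← this, hprod]
      have : d = fun _ => 1 := by
        funext x
        rcases eq_or_ne x i with rfl | hxi
        · exact hdi
        · apply hd
          have : (x : ℕ) < n := x.isLt
          have hxj : (x : ℕ) ≠ j := fun h => hxi (Fin.ext h)
          omega
      rw [this]
      have h1 : Matrix.diagonal (fun _ : Fin n => (1 : k)) = 1 := by
        rw [show (fun _ : Fin n => (1 : k)) = (1 : Fin n → k) from rfl]
        exact Matrix.diagonal_one
      rw [h1]; exact good_one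

lemma good_of_det_one (M : Matrix (Fin n) (Fin n) k) (hM : M.det = 1) : Good M := by
  apply diagonal_transvection_induction Good M
  · intro D hD
    rw [hM, det_diagonal] at hD
    exact good_diagonal_aux n 0 (by omega) D hD (by intro x hx; omega)
  · rintro ⟨i, j, hij, c⟩
    simpa [TransvectionStruct.toMatrix_mk] using good_transvection hij c
  · exact fun A B hA hB => good_mul hA hB

end ExistsPolyPathSL

/-- for each field `k`, `n ≥ 2`, and `f, g ∈ SL_n(k)`, there is a
polynomial map `ν : k → SL_n(k)` (a matrix of one-variable polynomials with
`det = 1` identically) with `ν(0) = f` and `ν(1) = g`. -/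
theorem exists_polynomial_path_in_SL (k : Type*) [Field k] (n : ℕ) (hn : 2 ≤ n)
    (f g : Matrix.SpecialLinearGroup (Fin n) k) :
    ∃ P : Matrix (Fin n) (Fin n) (Polynomial k),
      P.det = 1 ∧
      (Matrix.of fun i j => (P i j).eval 0) = (f : Matrix (Fin n) (Fin n) k) ∧
      (Matrix.of fun i j => (P i j).eval 1) = (g : Matrix (Fin n) (Fin n) k) := by
  have hfdet : (f : Matrix (Fin n) (Fin n) k).det = 1 := f.prop
  have hgdet : (g : Matrix (Fin n) (Fin n) k).det = 1 := g.prop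
  have hfinv : ((f : Matrix (Fin n) (Fin n) k))⁻¹ * (f : Matrix (Fin n) (Fin n) k) = 1 :=
    Matrix.nonsing_inv_mul _ (by simp [hfdet])
  obtain ⟨Q, hQdet, hQ0, hQ1⟩ := ExistsPolyPathSL.good_of_det_one
    ((g : Matrix (Fin n) (Fin n) k) * ((f : Matrix (Fin n) (Fin n) k))⁻¹)
    (by rw [Matrix.det_mul, hgdet, Matrix.det_nonsing_inv, hfdet]; simp)
  refine ⟨Q * (f : Matrix (Fin n) (Fin n) k).map Polynomial.C, ?_, ?_, ?_⟩
  · rw [Matrix.det_mul, hQdet, one_mul]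
    have := (RingHom.map_det (Polynomial.C : k →+* Polynomial k)
      (f : Matrix (Fin n) (Fin n) k)).symm
    rw [RingHom.mapMatrix_apply] at this
    rw [this, hfdet, Polynomial.C_1]
  · show ((Q * (f : Matrix (Fin n) (Fin n) k).map Polynomial.C).map (Polynomial.eval 0)) = _
    rw [ExistsPolyPathSL.map_eval_mul, hQ0, Matrix.map_map, one_mul]
    ext r s
    simp [Matrix.map_apply]
  · show ((Q * (f : Matrix (Fin n) (Fin n) k).map Polynomial.C).map (Polynomial.eval 1)) = _
    rw [ExistsPolyPathSL.map_eval_mul, hQ1, Matrix.map_map]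
    have : ((f : Matrix (Fin n) (Fin n) k).map (Polynomial.eval 1 ∘ Polynomial.C)) =
        (f : Matrix (Fin n) (Fin n) k) := by
      ext r s; simp [Matrix.map_apply]
    rw [this, mul_assoc, hfinv, mul_one]
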